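/- Let ρ be a probabilistic choice function and, for each i, let s̄_i denote the maximum element of S_i (the ▷-best alternative in S_i). Then there exists a probability distribution π over choice types that represents ρ and whose support consists only of near-optimal choice types if and only if ∑_{i=1}^n (1 − ρ_i(s̄_i)) ≤ 1. -/
import Mathlib


open Finset

variable {n : ℕ} {S : Fin n → Type*} [∀ i, Fintype (S i)] [∀ i, LinearOrder (S i)]

/-- `ρ` is a probabilistic choice function: each `ρ i` is a probability distribution on `S i`. -/
def IsPCF (ρ : ∀ i, S i → ℝ) : Prop :=
  (∀ i (x : S i), 0 ≤ ρ i x) ∧ ∀ i, ∑ x : S i, ρ i x = 1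

/-- The cumulative choice function `P_i(x) = ∑_{y ≤ x} ρ_i(y)`. -/
noncomputable def cumul (ρ : ∀ i, S i → ℝ) (i : Fin n) (x : S i) : ℝ :=
  ∑ y ∈ Finset.univ.filter (fun y => y ≤ x), ρ i y

/-- `π` is a probability distribution over choice types. -/
def IsDist (π : (∀ i, S i) → ℝ) : Prop :=
  (∀ s, 0 ≤ π s) ∧ ∑ s : ∀ i, S i, π s = 1

/-- `π` represents `ρ`: the marginals of `π` agree with `ρ`. -/
def Represents (π : (∀ i, S i) → ℝ) (ρ : ∀ i, S i → ℝ) : Prop :=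
  ∀ i (x : S i), ∑ s ∈ Finset.univ.filter (fun s : ∀ i, S i => s i = x), π s = ρ i x

/-- `π(⊴ s)`: total mass on choice types componentwise below `s`. -/
noncomputable def cdfLe (π : (∀ i, S i) → ℝ) (s : ∀ i, S i) : ℝ :=
  ∑ t ∈ Finset.univ.filter (fun t : ∀ i, S i => ∀ i, t i ≤ s i), π t

/-- `ρ` has a representation supported on near-optimal choice types
iff the total probability of mistakes is at most 1. -/
theorem one_mistake_characterization [∀ i, Nonempty (S i)]
    (ρ : ∀ i, S i → ℝ) (hρ : IsPCF ρ)
    (sbar : ∀ i, S i) (hsbar : ∀ i (x : S i), x ≤ sbar i) :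
    (∃ π : (∀ i, S i) → ℝ, IsDist π ∧ Represents π ρ ∧
        ∀ s : ∀ i, S i, 0 < π s →
          (Finset.univ.filter (fun i => s i ≠ sbar i)).card ≤ 1) ↔
      ∑ i, (1 - ρ i (sbar i)) ≤ 1 := by
  classical
  obtain ⟨hρ0, hρ1⟩ := hρ
  constructor
  · rintro ⟨π, ⟨hpos, hsum⟩, hrep, hsupp⟩
    have key : ∀ i, 1 - ρ i (sbar i)
        = ∑ s ∈ univ.filter (fun s : ∀ i, S i => s i ≠ sbar i), π s := by
      intro i
      have h1 := hrep i (sbar i)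
      have h2 := Finset.sum_filter_add_sum_filter_not univ
        (fun s : ∀ i, S i => s i = sbar i) π
      rw [hsum] at h2
      have : (univ.filter (fun s : ∀ i, S i => ¬ s i = sbar i))
          = (univ.filter (fun s : ∀ i, S i => s i ≠ sbar i)) := rfl
      rw [this] at h2
      linarith
    calc ∑ i, (1 - ρ i (sbar i))
        = ∑ i, ∑ s ∈ univ.filter (fun s : ∀ i, S i => s i ≠ sbar i), π s := by
          exact Finset.sum_congr rfl fun i _ => key i
      _ = ∑ s : ∀ i, S i, ∑ i, if s i ≠ sbar i then π s else 0 := by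
          rw [Finset.sum_comm]
          exact Finset.sum_congr rfl fun i _ => (Finset.sum_filter _ _)
      _ = ∑ s : ∀ i, S i,
            ((univ.filter (fun i => s i ≠ sbar i)).card : ℝ) * π s := by
          refine Finset.sum_congr rfl fun s _ => ?_
          rw [← Finset.sum_filter, Finset.sum_const, nsmul_eq_mul]
      _ ≤ ∑ s : ∀ i, S i, π s := by
          refine Finset.sum_le_sum fun s _ => ?_
          rcases eq_or_lt_of_le (hpos s) with h | h
          · rw [← h]; simp
          · have hc := hsupp s h
            calc ((univ.filter (fun i => s i ≠ sbar i)).card : ℝ) * π s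
                ≤ 1 * π s := by
                  apply mul_le_mul_of_nonneg_right _ (hpos s)
                  exact_mod_cast hc
              _ = π s := one_mul _
      _ = 1 := hsum
  · intro hM
    set c : ℝ := 1 - ∑ i, (1 - ρ i (sbar i)) with hc
    have hc0 : 0 ≤ c := by rw [hc]; linarith
    refine ⟨fun s => (if s = sbar then c else 0) +
      ∑ j : Fin n, ∑ y ∈ univ.filter (fun y => y ≠ sbar j),
        (if s = Function.update sbar j y then ρ j y else 0), ?_, ?_, ?_⟩
    · constructor
      · intro s
        simp only []
        apply add_nonneg
        · split
          · exact hc0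
          · exact le_refl 0
        · refine Finset.sum_nonneg fun j _ => Finset.sum_nonneg fun y _ => ?_
          split
          · exact hρ0 j _
          · exact le_refl 0
      · simp only []
        rw [Finset.sum_add_distrib]
        have h1 : ∑ s : ∀ i, S i, (if s = sbar then c else 0) = c := by
          rw [Finset.sum_ite_eq' univ sbar fun _ => c]
          simp
        have h2 : ∑ s : ∀ i, S i, ∑ j : Fin n,
            ∑ y ∈ univ.filter (fun y => y ≠ sbar j),
              (if s = Function.update sbar j y then ρ j y else 0)
            = ∑ j : Fin n, (1 - ρ j (sbar j)) := by
          rw [Finset.sum_comm]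
          refine Finset.sum_congr rfl fun j _ => ?_
          rw [Finset.sum_comm]
          have : ∀ y ∈ univ.filter (fun y => y ≠ sbar j),
              ∑ s : ∀ i, S i,
                (if s = Function.update sbar j y then ρ j y else 0) = ρ j y := by
            intro y _
            rw [Finset.sum_ite_eq' univ (Function.update sbar j y) fun _ => ρ j y]
            simp
          rw [Finset.sum_congr rfl this, Finset.filter_ne' univ (sbar j),
            Finset.sum_erase_eq_sub (Finset.mem_univ _), hρ1 j]
        rw [h1, h2, hc]
        ring
    · intro i x
      simp only []
      rw [Finset.sum_add_distrib]
      have h1 : ∑ s ∈ univ.filter (fun s : ∀ i, S i => s i = x),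
          (if s = sbar then c else 0) = if sbar i = x then c else 0 := by
        rw [Finset.sum_ite_eq' _ sbar fun _ => c]
        simp
      have h2 : ∑ s ∈ univ.filter (fun s : ∀ i, S i => s i = x),
          ∑ j : Fin n, ∑ y ∈ univ.filter (fun y => y ≠ sbar j),
            (if s = Function.update sbar j y then ρ j y else 0)
          = ∑ j : Fin n, ∑ y ∈ univ.filter (fun y => y ≠ sbar j),
              (if Function.update sbar j y i = x then ρ j y else 0) := by
        rw [Finset.sum_comm]
        refine Finset.sum_congr rfl fun j _ => ?_
        rw [Finset.sum_comm]
        refine Finset.sum_congr rfl fun y _ => ?_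
        rw [Finset.sum_ite_eq' _ (Function.update sbar j y) fun _ => ρ j y]
        simp
      rw [h1, h2]
      have hfi : ∑ y ∈ univ.filter (fun y => y ≠ sbar i),
          (if Function.update sbar i y i = x then ρ i y else 0)
          = if x ≠ sbar i then ρ i x else 0 := by
        simp only [Function.update_self]
        rw [Finset.sum_ite_eq' (univ.filter (fun y => y ≠ sbar i)) x fun y => ρ i y]
        simp [Finset.mem_filter]
      have hfj : ∀ j, j ≠ i → ∑ y ∈ univ.filter (fun y => y ≠ sbar j),
          (if Function.update sbar j y i = x then ρ j y else 0)
          = if sbar i = x then 1 - ρ j (sbar j) else 0 := by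
        intro j hj
        have hupd : ∀ y, Function.update sbar j y i = sbar i :=
          fun y => Function.update_of_ne (fun h => hj h.symm) _ _
        simp only [hupd]
        split
        · rw [Finset.filter_ne' univ (sbar j),
            Finset.sum_erase_eq_sub (Finset.mem_univ _), hρ1 j]
        · exact Finset.sum_const_zero
      rw [← Finset.sum_erase_add univ _ (Finset.mem_univ i), hfi]
      rw [Finset.sum_congr rfl (fun j hj => hfj j (Finset.ne_of_mem_erase hj))]
      have hE : ∑ j ∈ univ.erase i, (1 - ρ j (sbar j))
          = (∑ j, (1 - ρ j (sbar j))) - (1 - ρ i (sbar i)) :=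
        Finset.sum_erase_eq_sub (Finset.mem_univ i)
      by_cases hx : sbar i = x
      · subst hx
        simp only [if_pos rfl, ne_eq, not_true_eq_false, if_false, if_true]
        rw [hE, hc]
        ring
      · rw [if_neg hx]
        have : ∀ j ∈ univ.erase i,
            (if sbar i = x then 1 - ρ j (sbar j) else 0) = 0 :=
          fun j _ => if_neg hx
        rw [Finset.sum_congr rfl this, Finset.sum_const_zero, zero_add, zero_add,
          if_pos (Ne.symm hx)]
    · intro s hs
      by_contra hcard
      have hne1 : s ≠ sbar := by
        intro h; subst h
        simp at hcard
      have hne2 : ∀ j, ∀ y ∈ univ.filter (fun y => y ≠ sbar j),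
          s ≠ Function.update sbar j y := by
        intro j y hy h
        apply hcard
        subst h
        have hsub : (univ.filter (fun i => Function.update sbar j y i ≠ sbar i))
            ⊆ {j} := by
          intro i hi
          simp only [Finset.mem_filter, Finset.mem_univ, true_and] at hi
          simp only [Finset.mem_singleton]
          by_contra hij
          exact hi (Function.update_of_ne hij _ _)
        calc _ ≤ ({j} : Finset (Fin n)).card := Finset.card_le_card hsub
          _ = 1 := Finset.card_singleton j
      have hzero : (if s = sbar then c else 0) +
          ∑ j : Fin n, ∑ y ∈ univ.filter (fun y => y ≠ sbar j),
            (if s = Function.update sbar j y then ρ j y else 0) = 0 := by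
        rw [if_neg hne1, zero_add]
        refine Finset.sum_eq_zero fun j _ => Finset.sum_eq_zero fun y hy => ?_
        rw [if_neg (hne2 j y hy)]
      simp only [] at hs
      rw [hzero] at hs
      exact lt_irrefl 0 hs
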